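/- If λ ∈ 𝔥 is nonzero, then the Fock module M(1,λ) is an irreducible module for the fixed-point vertex operator subalgebra 𝓗^+, and M(1,λ) and M(1,−λ) are isomorphic as 𝓗^+-modules. -/

import Mathlib

/-!
Common framework: vertex operator algebras over ℂ encoded via their modes,
weak/admissible/ordinary modules, twisted modules, Zhu's algebra data,
and the free bosonic (Heisenberg) vertex operator algebra `𝓗 = M(1)` of rank `ℓ`
together with its `θ`-fixed subalgebra `𝓗⁺`.
-/

open scoped BigOperators DirectSum TensorProduct

noncomputable section

/-- Generalized binomial coefficient `(q choose n)` for `q : ℚ`. -/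
def qchoose (q : ℚ) : ℕ → ℚ
  | 0 => 1
  | n + 1 => qchoose q n * (q - n) / (n + 1)

/-- Generalized binomial coefficient of an integer, as a complex number. -/
def zchoose (m : ℤ) (n : ℕ) : ℂ := ((qchoose (m : ℚ) n : ℚ) : ℂ)

/-- A vertex operator algebra over `ℂ`, encoded through its modes:
`Y u n : Module.End ℂ V` is the `n`-th mode `u_n` of the vertex operator `Y(u,z)`.
The axioms are: truncation, the vacuum and creation axioms, the (component form of
the) Jacobi/Borcherds identity, a lower-truncated `ℤ`-grading by `L(0)`-eigenvalues
with finite dimensional homogeneous pieces compatible with the modes, the Virasoro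
relations for the conformal vector and the `L(-1)`-derivative (translation) axiom. -/
structure VOA (V : Type) [AddCommGroup V] [Module ℂ V] : Type where
  Y : V →ₗ[ℂ] ℤ → Module.End ℂ V
  one : V
  omega : V
  wt : ℤ → Submodule ℂ V
  centralCharge : ℂ
  internal : DirectSum.IsInternal wt
  one_wt : one ∈ wt 0
  omega_wt : omega ∈ wt 2
  one_ne_zero : one ≠ 0
  fdim : ∀ n : ℤ, FiniteDimensional ℂ (wt n)
  bounded_below : ∃ N : ℤ, ∀ n : ℤ, n < N → wt n = ⊥
  trunc : ∀ u v : V, ∃ N : ℤ, ∀ n : ℤ, N ≤ n → Y u n v = 0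
  vacuum_act : ∀ n : ℤ, Y one n = if n = -1 then (1 : Module.End ℂ V) else 0
  create : ∀ u : V, Y u (-1) one = u
  create_ge : ∀ (u : V) (n : ℤ), 0 ≤ n → Y u n one = 0
  mode_wt : ∀ (k : ℤ) (u : V), u ∈ wt k → ∀ (m n : ℤ) (v : V), v ∈ wt m →
    Y u n v ∈ wt (m + k - n - 1)
  L0_diag : ∀ (n : ℤ) (v : V), v ∈ wt n → Y omega 1 v = (n : ℂ) • v
  translation : ∀ (u : V) (n : ℤ), Y (Y omega 0 u) n = (-(n : ℂ)) • Y u (n - 1)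
  virasoro : ∀ m n : ℤ,
    Y omega (m + 1) * Y omega (n + 1) - Y omega (n + 1) * Y omega (m + 1)
      = ((m : ℂ) - (n : ℂ)) • Y omega (m + n + 1)
        + (if m + n = 0 then (((m ^ 3 - m : ℤ) : ℂ) / 12) * centralCharge else 0)
            • (1 : Module.End ℂ V)
  borcherds : ∀ (u v w : V) (p m n : ℤ),
    ∑ᶠ i : ℕ, zchoose m i • Y (Y u (p + i) v) (m + n - i) w
      = ∑ᶠ i : ℕ, ((-1 : ℂ) ^ i * zchoose p i) •
          (Y u (m + p - i) (Y v (n + i) w)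
            - ((-1 : ℂ) ^ p) • Y v (n + p - i) (Y u (m + i) w))

variable {V : Type} [AddCommGroup V] [Module ℂ V]

/-- Simplicity of a vertex operator algebra: the only subspaces invariant under
all modes are `0` and the whole space. -/
def VOA.Simple (A : VOA V) : Prop :=
  ∀ U : Submodule ℂ V, (∀ (u : V) (n : ℤ) (v : V), v ∈ U → A.Y u n v ∈ U) → U = ⊥ ∨ U = ⊤

/-- The decomposition of a vertex operator algebra into its homogeneous pieces. -/
noncomputable def VOA.decompose (A : VOA V) : V ≃ₗ[ℂ] ⨁ n : ℤ, A.wt n :=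
  (LinearEquiv.ofBijective (DirectSum.coeLinearMap A.wt) A.internal).symm

/-- The homogeneous component of weight `n` of a vector. -/
noncomputable def VOA.hcomp (A : VOA V) (n : ℤ) (u : V) : V := (A.decompose u n : V)

/-- Zhu's product `u * v` for `u` (treated as) homogeneous of weight `k`:
`u*v = ∑_{i≥0} (k choose i) u_{i-1} v`. -/
noncomputable def VOA.mulAux (A : VOA V) (k : ℤ) (u v : V) : V :=
  ∑ᶠ i : ℕ, zchoose k i • A.Y u ((i : ℤ) - 1) v

/-- Zhu's circle product `u ∘ v` for `u` (treated as) homogeneous of weight `k`: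
`u∘v = ∑_{i≥0} (k choose i) u_{i-2} v`. -/
noncomputable def VOA.circAux (A : VOA V) (k : ℤ) (u v : V) : V :=
  ∑ᶠ i : ℕ, zchoose k i • A.Y u ((i : ℤ) - 2) v

/-- Zhu's product `u * v`, extended bilinearly via homogeneous components of `u`. -/
noncomputable def VOA.star (A : VOA V) (u v : V) : V :=
  ∑ᶠ k : ℤ, A.mulAux k (A.hcomp k u) v

/-- The subspace `O(V)` spanned by all circle products `u ∘ v` with `u` homogeneous;
Zhu's algebra is `A(V) = V/O(V)` with product induced by `VOA.star`. -/
def VOA.Osub (A : VOA V) : Submodule ℂ V :=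
  Submodule.span ℂ {w | ∃ (k : ℤ) (u v : V), u ∈ A.wt k ∧ w = A.circAux k u v}

/-- A weak module for a vertex operator algebra, given by modes satisfying
truncation, the vacuum axiom and the Borcherds identity. -/
structure WkMod (A : VOA V) (M : Type) [AddCommGroup M] [Module ℂ M] : Type where
  act : V →ₗ[ℂ] ℤ → Module.End ℂ M
  trunc : ∀ (u : V) (w : M), ∃ N : ℤ, ∀ n : ℤ, N ≤ n → act u n w = 0
  vacuum_act : ∀ n : ℤ, act A.one n = if n = -1 then (1 : Module.End ℂ M) else 0
  borcherds : ∀ (u v : V) (w : M) (p m n : ℤ),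
    ∑ᶠ i : ℕ, zchoose m i • act (A.Y u (p + i) v) (m + n - i) w
      = ∑ᶠ i : ℕ, ((-1 : ℂ) ^ i * zchoose p i) •
          (act u (m + p - i) (act v (n + i) w)
            - ((-1 : ℂ) ^ p) • act v (n + p - i) (act u (m + i) w))

/-- An admissible (`ℕ`-gradable) module for a vertex operator algebra:
a weak module with an `ℕ`-grading with nonzero top level, compatible with weights. -/
structure AdmMod (A : VOA V) (M : Type) [AddCommGroup M] [Module ℂ M]
    extends WkMod A M : Type where
  gr : ℕ → Submodule ℂ M
  grInternal : DirectSum.IsInternal gr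
  top_ne_bot : gr 0 ≠ ⊥
  gr_mode : ∀ (k : ℤ) (u : V), u ∈ A.wt k → ∀ (m : ℤ) (n : ℕ) (w : M), w ∈ gr n →
    act u m w ∈
      if 0 ≤ (n : ℤ) + k - m - 1 then gr ((n : ℤ) + k - m - 1).toNat else ⊥

/-- An ordinary module for a vertex operator algebra: a weak module on which `L(0)`
acts semisimply with finite dimensional eigenspaces whose weights are truncated from
below in each coset `λ + ℤ`. -/
structure OrdMod (A : VOA V) (M : Type) [AddCommGroup M] [Module ℂ M]
    extends WkMod A M : Type where
  wtm : ℂ → Submodule ℂ M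
  indep : iSupIndep wtm
  spans : ⨆ c : ℂ, wtm c = ⊤
  L0_diag : ∀ (c : ℂ) (w : M), w ∈ wtm c → act A.omega 1 w = c • w
  fdim : ∀ c : ℂ, FiniteDimensional ℂ (wtm c)
  bounded_below : ∀ c : ℂ, ∃ N : ℤ, ∀ m : ℤ, m < N → wtm (c + m) = ⊥

/-- Irreducibility of a weak module. -/
def WkMod.Irreducible {A : VOA V} {M : Type} [AddCommGroup M] [Module ℂ M]
    (P : WkMod A M) : Prop :=
  (∃ w : M, w ≠ 0) ∧
    ∀ U : Submodule ℂ M, (∀ (u : V) (n : ℤ) (w : M), w ∈ U → P.act u n w ∈ U) →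
      U = ⊥ ∨ U = ⊤

/-- Isomorphism of two weak modules over the same vertex operator algebra. -/
def ModIso (A : VOA V) {M N : Type} [AddCommGroup M] [Module ℂ M]
    [AddCommGroup N] [Module ℂ N] (P : WkMod A M) (Q : WkMod A N) : Prop :=
  ∃ f : M ≃ₗ[ℂ] N, ∀ (u : V) (n : ℤ) (w : M), f (P.act u n w) = Q.act u n (f w)

/-- The action of the zero-mode `o(u) = u_{wt u - 1}` (extended linearly from
homogeneous vectors) on a weak module; it preserves the top level of an
admissible module. -/
noncomputable def WkMod.oAct {A : VOA V} {M : Type} [AddCommGroup M] [Module ℂ M]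
    (Q : WkMod A M) (u : V) (w : M) : M :=
  ∑ᶠ k : ℤ, Q.act (A.hcomp k u) (k - 1) w

/-- Action of a word of creation operators `h_{a_1}(-n_1) ⋯ h_{a_k}(-n_k)`. -/
def wordAct {ℓ : ℕ} {M : Type} (f : Fin ℓ → ℤ → M → M) : List (Fin ℓ × ℕ+) → M → M
  | [], w => w
  | (a, n) :: L, w => f a (-((n : ℕ) : ℤ)) (wordAct f L w)

/-- Action of a word of twisted creation operators
`h_{a_1}(-n_1+1/2) ⋯ h_{a_k}(-n_k+1/2)` (indices doubled). -/
def twWordAct {ℓ : ℕ} {M : Type} (f : Fin ℓ → ℤ → M → M) : List (Fin ℓ × ℕ+) → M → M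
  | [], w => w
  | (a, n) :: L, w => f a (-(2 * ((n : ℕ) : ℤ) - 1)) (twWordAct f L w)

/-- `A` is the rank `ℓ` free bosonic (Heisenberg) vertex operator algebra
`𝓗 = M(1)`, with generators `hgen a = h_a(-1)𝟏` for an orthonormal basis
`h_1, …, h_ℓ` of `𝔥`: the generators have weight one, their modes satisfy the
Heisenberg commutation relations `[h_a(m), h_b(n)] = m δ_{ab} δ_{m+n,0}`, the
conformal vector is `ω = (1/2) ∑_a h_a(-1)²𝟏`, and `V` is spanned by the vectors
`h_{a_1}(-n_1) ⋯ h_{a_k}(-n_k)𝟏`. -/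
structure IsHeisenberg {ℓ : ℕ} (A : VOA V) (hgen : Fin ℓ → V) : Prop where
  wt_one : ∀ a, hgen a ∈ A.wt 1
  heis_comm : ∀ (a b : Fin ℓ) (m n : ℤ),
    A.Y (hgen a) m * A.Y (hgen b) n - A.Y (hgen b) n * A.Y (hgen a) m
      = (if a = b ∧ m + n = 0 then (m : ℂ) else 0) • (1 : Module.End ℂ V)
  omega_eq : A.omega
      = (1 / 2 : ℂ) • ∑ a : Fin ℓ, A.Y (hgen a) (-1) (A.Y (hgen a) (-1) A.one)
  span_words : Submodule.span ℂ
      {v : V | ∃ L : List (Fin ℓ × ℕ+),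
        v = wordAct (fun a k w => A.Y (hgen a) k w) L A.one} = ⊤

/-- `θ` is the automorphism of the free bosonic vertex operator algebra induced
by `-1` on `𝔥`. -/
structure IsThetaAut {ℓ : ℕ} (A : VOA V) (hgen : Fin ℓ → V) (θ : V ≃ₗ[ℂ] V) : Prop where
  map_one : θ A.one = A.one
  map_omega : θ A.omega = A.omega
  map_Y : ∀ (u : V) (n : ℤ) (v : V), θ (A.Y u n v) = A.Y (θ u) n (θ v)
  map_gen : ∀ a, θ (hgen a) = -hgen a
  map_wt : ∀ (k : ℤ) (v : V), v ∈ A.wt k → θ v ∈ A.wt k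

/-- `B` (with underlying space `W`, embedded in `V` by `ι`) is the fixed point
vertex operator subalgebra `V^θ` of the involution `θ`. -/
structure IsFixedSubVOA {W : Type} [AddCommGroup W] [Module ℂ W]
    (A : VOA V) (θ : V ≃ₗ[ℂ] V) (B : VOA W) (ι : W →ₗ[ℂ] V) : Prop where
  inj : Function.Injective ι
  range_eq : LinearMap.range ι
      = Module.End.eigenspace (θ.toLinearMap : Module.End ℂ V) 1
  map_one : ι B.one = A.one
  map_omega : ι B.omega = A.omega
  map_Y : ∀ (u : W) (n : ℤ) (v : W), ι (B.Y u n v) = A.Y (ι u) n (ι v)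
  map_wt : ∀ (k : ℤ) (w : W), w ∈ B.wt k ↔ ι w ∈ A.wt k

/-- `P` is (isomorphic to) the Fock module `M(1,λ)` over the rank `ℓ` Heisenberg
vertex operator algebra: it has a nonzero vector `v₀` with `h_a(n)v₀ = 0` for
`n ≥ 1`, `h_a(0)v₀ = λ_a v₀`, which generates `M` under the creation operators. -/
def IsFockModule {ℓ : ℕ} {M : Type} [AddCommGroup M] [Module ℂ M]
    (A : VOA V) (hgen : Fin ℓ → V) (P : WkMod A M) (lam : Fin ℓ → ℂ) : Prop :=
  ∃ v0 : M, v0 ≠ 0 ∧ (∀ (a : Fin ℓ) (n : ℤ), 1 ≤ n → P.act (hgen a) n v0 = 0) ∧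
    (∀ a : Fin ℓ, P.act (hgen a) 0 v0 = lam a • v0) ∧
    Submodule.span ℂ {w : M | ∃ L : List (Fin ℓ × ℕ+),
      w = wordAct (fun a k x => P.act (hgen a) k x) L v0} = ⊤

/-- A weak `θ`-twisted module (for an involution `θ`): the modes are indexed by
`(1/2)ℤ`, encoded here by doubling (so `act u k` is the mode `u_{k/2}`); on the
eigenspace `θ = (-1)^r` only modes with `k ≡ r (mod 2)` act, and the component
form of the twisted Jacobi identity holds. -/
structure TwMod (A : VOA V) (θ : V ≃ₗ[ℂ] V) (M : Type) [AddCommGroup M]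
    [Module ℂ M] : Type where
  act : V →ₗ[ℂ] ℤ → Module.End ℂ M
  trunc : ∀ (u : V) (w : M), ∃ N : ℤ, ∀ n : ℤ, N ≤ n → act u n w = 0
  vacuum_act : ∀ n : ℤ, act A.one n = if n = -2 then (1 : Module.End ℂ M) else 0
  moding : ∀ (u : V) (r : ℤ), θ u = ((-1 : ℂ) ^ r) • u →
    ∀ k : ℤ, (k - r) % 2 ≠ 0 → act u k = 0
  borcherds : ∀ (u v : V) (r s : ℤ), θ u = ((-1 : ℂ) ^ r) • u →
    θ v = ((-1 : ℂ) ^ s) • v → ∀ (w : M) (p K N : ℤ),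
    ∑ᶠ i : ℕ, ((qchoose ((K : ℚ) / 2) i : ℚ) : ℂ) • act (A.Y u (p + i) v) (K + N - 2 * i) w
      = ∑ᶠ i : ℕ, ((-1 : ℂ) ^ i * zchoose p i) •
          (act u (K + 2 * p - 2 * i) (act v (N + 2 * i) w)
            - ((-1 : ℂ) ^ p) • act v (N + 2 * p - 2 * i) (act u (K + 2 * i) w))

/-- Irreducibility of a twisted module. -/
def TwMod.Irreducible {A : VOA V} {θ : V ≃ₗ[ℂ] V} {M : Type} [AddCommGroup M]
    [Module ℂ M] (T : TwMod A θ M) : Prop :=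
  (∃ w : M, w ≠ 0) ∧
    ∀ U : Submodule ℂ M, (∀ (u : V) (k : ℤ) (w : M), w ∈ U → T.act u k w ∈ U) →
      U = ⊥ ∨ U = ⊤

/-- `T` is (isomorphic to) the canonical irreducible `θ`-twisted module
`𝓗(θ) = S(𝔥 ⊗ t^{-1/2}ℂ[t^{-1/2}])` of the rank `ℓ` free bosonic vertex operator
algebra: it has a nonzero vector killed by all modes `h_a(k/2)`, `k ≥ 1`, which
generates it under the twisted creation operators. -/
def IsCanonicalTwMod {ℓ : ℕ} {M : Type} [AddCommGroup M] [Module ℂ M]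
    (A : VOA V) (hgen : Fin ℓ → V) {θ : V ≃ₗ[ℂ] V} (T : TwMod A θ M) : Prop :=
  ∃ v0 : M, v0 ≠ 0 ∧ (∀ (a : Fin ℓ) (k : ℤ), 1 ≤ k → T.act (hgen a) k v0 = 0) ∧
    Submodule.span ℂ {w : M | ∃ L : List (Fin ℓ × ℕ+),
      w = twWordAct (fun a k x => T.act (hgen a) k x) L v0} = ⊤

/-- `σ` is the canonical involution of the twisted module `𝓗(θ)` (acting by
`(-1)^k` on monomials of length `k`): it is an involution compatible with `θ`
through the twisted action and fixing the lowest weight vectors. -/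
def TwInvolution {ℓ : ℕ} {M : Type} [AddCommGroup M] [Module ℂ M]
    (A : VOA V) (hgen : Fin ℓ → V) {θ : V ≃ₗ[ℂ] V} (T : TwMod A θ M)
    (σ : M ≃ₗ[ℂ] M) : Prop :=
  (∀ w : M, σ (σ w) = w) ∧
  (∀ (u : V) (k : ℤ) (w : M), σ (T.act u k w) = T.act (θ u) k (σ w)) ∧
  (∀ v0 : M, (∀ (a : Fin ℓ) (k : ℤ), 1 ≤ k → T.act (hgen a) k v0 = 0) → σ v0 = v0)

/-- The weak `B = V^θ`-module `Q` "is" the eigenspace `V^{(ε)}` of `θ` on `V`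
(e.g. `𝓗⁺` itself for `ε = 1` and `𝓗⁻` for `ε = -1`), with action obtained by
restricting the vertex operators of `V`. -/
def IsEigenPartModule {W N : Type} [AddCommGroup W] [Module ℂ W]
    [AddCommGroup N] [Module ℂ N] (A : VOA V) (θ : V ≃ₗ[ℂ] V) {B : VOA W}
    (ι : W →ₗ[ℂ] V) (ε : ℂ) (Q : WkMod B N) : Prop :=
  ∃ j : N →ₗ[ℂ] V, Function.Injective j ∧
    LinearMap.range j = Module.End.eigenspace (θ.toLinearMap : Module.End ℂ V) ε ∧
    ∀ (u : W) (n : ℤ) (w : N), j (Q.act u n w) = A.Y (ι u) n (j w)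

/-- The weak `B = V^θ`-module `Q` "is" the eigenspace `𝓗(θ)^{(ε)}` of the
involution `σ` on the twisted module `𝓗(θ)`, with the restricted twisted action
(`u ∈ V^θ` acts by its integral modes). -/
def IsTwEigenPartModule {W MT N : Type} [AddCommGroup W] [Module ℂ W]
    [AddCommGroup MT] [Module ℂ MT] [AddCommGroup N] [Module ℂ N]
    (A : VOA V) {θ : V ≃ₗ[ℂ] V} {B : VOA W} (ι : W →ₗ[ℂ] V)
    (T : TwMod A θ MT) (σ : MT ≃ₗ[ℂ] MT) (ε : ℂ) (Q : WkMod B N) : Prop :=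
  ∃ j : N →ₗ[ℂ] MT, Function.Injective j ∧
    LinearMap.range j = Module.End.eigenspace (σ.toLinearMap : Module.End ℂ MT) ε ∧
    ∀ (u : W) (n : ℤ) (w : N), j (Q.act u n w) = T.act (ι u) (2 * n) (j w)

/-- The weak `B = 𝓗⁺`-module `Q` "is" the restriction to `𝓗⁺` of the Fock module
`M(1,λ)`. -/
def IsFockRestriction {ℓ : ℕ} {W N : Type} [AddCommGroup W] [Module ℂ W]
    [AddCommGroup N] [Module ℂ N] (A : VOA V) (hgen : Fin ℓ → V) {B : VOA W}
    (ι : W →ₗ[ℂ] V) (lam : Fin ℓ → ℂ) (Q : WkMod B N) : Prop :=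
  ∃ P : WkMod A N, IsFockModule A hgen P lam ∧
    ∀ (u : W) (n : ℤ), Q.act u n = P.act (ι u) n

/-- A realization of Zhu's algebra `A(V) = V/O(V)` of a vertex operator algebra
as an abstract associative `ℂ`-algebra `R`. -/
structure ZhuRealization (A : VOA V) (R : Type) [Ring R] [Algebra ℂ R] : Type where
  π : V →ₗ[ℂ] R
  surj : Function.Surjective π
  ker_eq : LinearMap.ker π = A.Osub
  map_star : ∀ u v : V, π (A.star u v) = π u * π v
  map_one : π A.one = 1

/-- The `R = A(V)`-module `M` "is" the top level `N(0)` of the admissible module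
`N`, where `[u] ∈ A(V)` acts on the top level by the zero-mode `o(u)`. -/
def IsTopLevelOf {R : Type} [Ring R] [Algebra ℂ R] {A : VOA V}
    (Z : ZhuRealization A R) {N : Type} [AddCommGroup N] [Module ℂ N]
    (Qa : AdmMod A N) (M : Type) [AddCommGroup M] [Module R M] : Prop :=
  ∃ f : M →+ N, Function.Injective f ∧ (∀ m : M, f m ∈ Qa.gr 0) ∧
    (∀ w ∈ Qa.gr 0, ∃ m : M, f m = w) ∧
    ∀ (u : V) (m : M), f (Z.π u • m) = Qa.toWkMod.oAct u (f m)

/-- Iterated Zhu product of a list of elements (an empty product is `[𝟏]`). -/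
noncomputable def starList (A : VOA V) : List V → V
  | [] => A.one
  | x :: L => A.star x (starList A L)

/-- The linear span of all Zhu-monomials in a set of generators; modulo `O(V)`
this is the subalgebra of `A(V)` generated by the images of the generators. -/
def genMonomials (A : VOA V) (gens : Set V) : Submodule ℂ V :=
  Submodule.span ℂ {w : V | ∃ L : List V, (∀ g ∈ L, g ∈ gens) ∧ w = starList A L}

/-- The subspace `𝓦^α ⊆ 𝓗` spanned by the monomials
`h_{a_1}(-n_1) ⋯ h_{a_k}(-n_k)𝟏` whose number of letters from `𝓗_c` is odd
exactly for `c ∈ α`; thus `wordSpanV A hgen ∅ = 𝓦 = 𝓗₁⁺ ⊗ ⋯ ⊗ 𝓗_ℓ⁺`. -/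
def wordSpanV {ℓ : ℕ} (A : VOA V) (hgen : Fin ℓ → V) (α : Finset (Fin ℓ)) :
    Submodule ℂ V :=
  Submodule.span ℂ {v : V | ∃ L : List (Fin ℓ × ℕ+),
    (∀ c : Fin ℓ, c ∈ α ↔ ¬ Even ((L.map Prod.fst).count c)) ∧
    v = wordAct (fun a k w => A.Y (hgen a) k w) L A.one}

/-- The element `S_{ab}(m,n) = h_a(-m)h_b(-n)𝟏` of `𝓗`. -/
def SV {ℓ : ℕ} (A : VOA V) (hgen : Fin ℓ → V) (a b : Fin ℓ) (m n : ℤ) : V :=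
  A.Y (hgen a) (-m) (A.Y (hgen b) (-n) A.one)

/-- The element `ω_a = (1/2) h_a(-1)²𝟏` of `𝓗⁺`. -/
def omegaV {ℓ : ℕ} (A : VOA V) (hgen : Fin ℓ → V) (a : Fin ℓ) : V :=
  (1 / 2 : ℂ) • SV A hgen a a 1 1

/-- The element `J_a = h_a(-1)⁴𝟏 - 2h_a(-3)h_a(-1)𝟏 + (3/2)h_a(-2)²𝟏` of `𝓗⁺`. -/
def JV {ℓ : ℕ} (A : VOA V) (hgen : Fin ℓ → V) (a : Fin ℓ) : V :=
  A.Y (hgen a) (-1) (A.Y (hgen a) (-1) (A.Y (hgen a) (-1) (A.Y (hgen a) (-1) A.one)))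
    - (2 : ℂ) • SV A hgen a a 3 1 + (3 / 2 : ℂ) • SV A hgen a a 2 2

variable {W : Type} [AddCommGroup W] [Module ℂ W]

/-- `E^u_{ab}` (for `a ≠ b`), as a combination of the `S_{ab}(1,m)`. -/
def EuW {ℓ : ℕ} (s : Fin ℓ → Fin ℓ → ℤ → ℤ → W) (a b : Fin ℓ) : W :=
  (5 : ℂ) • s a b 1 2 + (25 : ℂ) • s a b 1 3 + (36 : ℂ) • s a b 1 4 + (16 : ℂ) • s a b 1 5

/-- `E^t_{ab}` (for `a ≠ b`), as a combination of the `S_{ab}(1,m)`. -/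
def EtW {ℓ : ℕ} (s : Fin ℓ → Fin ℓ → ℤ → ℤ → W) (a b : Fin ℓ) : W :=
  (-16 : ℂ) • ((3 : ℂ) • s a b 1 2 + (14 : ℂ) • s a b 1 3 + (19 : ℂ) • s a b 1 4
    + (8 : ℂ) • s a b 1 5)

/-- `Λ_{ab}` (for `a ≠ b`), as a combination of the `S_{ab}(1,m)`. -/
def LamW {ℓ : ℕ} (s : Fin ℓ → Fin ℓ → ℤ → ℤ → W) (a b : Fin ℓ) : W :=
  (45 : ℂ) • s a b 1 2 + (190 : ℂ) • s a b 1 3 + (240 : ℂ) • s a b 1 4 + (96 : ℂ) • s a b 1 5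

/-- The full setting of the paper: `A = 𝓗` is the rank `ℓ` free bosonic vertex
operator algebra with Heisenberg generators `hgen`, `θ` is its `-1` involution,
and `B = 𝓗⁺` is the fixed point vertex operator subalgebra, embedded by `ι`. -/
structure HeisenbergPlusSetting (ℓ : ℕ) (V W : Type) [AddCommGroup V] [Module ℂ V]
    [AddCommGroup W] [Module ℂ W] : Type where
  A : VOA V
  hgen : Fin ℓ → V
  heis : IsHeisenberg A hgen
  θ : V ≃ₗ[ℂ] V
  thetaAut : IsThetaAut A hgen θ
  B : VOA W
  ι : W →ₗ[ℂ] V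
  fixedSub : IsFixedSubVOA A θ B ι

/-- Bundled weak module over a vertex operator algebra. -/
structure ARep (A : VOA V) : Type 1 where
  carrier : Type
  [acg : AddCommGroup carrier]
  [mod : Module ℂ carrier]
  str : WkMod A carrier

attribute [instance] ARep.acg ARep.mod

/-- Bundled admissible module over a vertex operator algebra. -/
structure BRep (A : VOA V) : Type 1 where
  carrier : Type
  [acg : AddCommGroup carrier]
  [mod : Module ℂ carrier]
  adm : AdmMod A carrier

attribute [instance] BRep.acg BRep.mod

/-- Bundled twisted module over a vertex operator algebra with involution. -/
structure TwRep (A : VOA V) (θ : V ≃ₗ[ℂ] V) : Type 1 where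
  carrier : Type
  [acg : AddCommGroup carrier]
  [mod : Module ℂ carrier]
  str : TwMod A θ carrier

attribute [instance] TwRep.acg TwRep.mod

end

/-! ### Auxiliary development for statement3 -/

noncomputable section AuxDev

attribute [local instance 2000] instBEqOfDecidableEq

instance (priority := 2000) lawfulBEqOfDecidableEq' {α : Type*} [DecidableEq α] :
    LawfulBEq α := by
  constructor
  · intro a b h
    simpa [instBEqOfDecidableEq, decide_eq_true_eq] using h

/-! #### Binomial coefficient lemmas -/

lemma qchoose_succ' (q : ℚ) (n : ℕ) : qchoose q (n + 1) = qchoose q n * (q - n) / (n + 1) := rfl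

lemma zchoose_zero_right (m : ℤ) : zchoose m 0 = 1 := by
  simp [zchoose, qchoose]

lemma zchoose_one_right (m : ℤ) : zchoose m 1 = (m : ℂ) := by
  simp [zchoose, qchoose]

lemma qchoose_zero_left {i : ℕ} (hi : i ≠ 0) : qchoose 0 i = 0 := by
  induction i with
  | zero => simp at hi
  | succ n ih =>
    rw [qchoose_succ']
    rcases Nat.eq_zero_or_pos n with h | h
    · subst h; norm_num
    · rw [ih (by omega)]; ring

lemma zchoose_zero_left {i : ℕ} (hi : i ≠ 0) : zchoose 0 i = 0 := by
  have : ((0 : ℤ) : ℚ) = 0 := by norm_num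
  rw [zchoose, this, qchoose_zero_left hi]
  norm_num

lemma qchoose_nat_eq_zero (N : ℕ) : ∀ i : ℕ, N < i → qchoose (N : ℚ) i = 0 := by
  intro i
  induction i with
  | zero => omega
  | succ k ih =>
    intro h
    rw [qchoose_succ']
    rcases eq_or_lt_of_le (Nat.lt_succ_iff.mp h) with h' | h'
    · subst h'
      have hz : ((N : ℚ) - (N : ℕ)) = 0 := by push_cast; ring
      rw [hz]
      ring
    · rw [ih h']; ring

lemma zchoose_eq_zero {m : ℤ} (hm : 0 ≤ m) {i : ℕ} (hi : m < i) : zchoose m i = 0 := by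
  have h1 : (m : ℚ) = ((m.toNat : ℕ) : ℚ) := by
    rw_mod_cast [Int.toNat_of_nonneg hm]
  rw [zchoose, h1, qchoose_nat_eq_zero _ _ (by omega)]
  norm_num

/-! #### finsum helper -/

lemma finsum_eq_range_sum {M : Type*} [AddCommMonoid M] (f : ℕ → M) (K : ℕ)
    (h0 : ∀ i, K ≤ i → f i = 0) : ∑ᶠ i, f i = ∑ i ∈ Finset.range K, f i := by
  apply finsum_eq_sum_of_support_subset
  intro i hi
  simp only [Function.mem_support] at hi
  simp only [Finset.coe_range, Set.mem_Iio]
  by_contra h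
  exact hi (h0 i (le_of_not_gt h))

/-! #### The model Fock space -/

variable {ℓ : ℕ}

abbrev HMon (ℓ : ℕ) := (Fin ℓ × ℕ+) →₀ ℕ

abbrev HFock (ℓ : ℕ) := HMon ℓ →₀ ℂ

def creOp (x : Fin ℓ × ℕ+) : HFock ℓ →ₗ[ℂ] HFock ℓ :=
  Finsupp.lmapDomain ℂ ℂ (fun d => d + Finsupp.single x 1)

def annOp (x : Fin ℓ × ℕ+) : HFock ℓ →ₗ[ℂ] HFock ℓ :=
  Finsupp.linearCombination ℂ
    (fun d : HMon ℓ => ((d x : ℂ)) • Finsupp.single (d - Finsupp.single x 1) (1 : ℂ))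

def mop (lam : Fin ℓ → ℂ) (a : Fin ℓ) (k : ℤ) : HFock ℓ →ₗ[ℂ] HFock ℓ :=
  if h : 0 < k then ((k : ℂ)) • annOp (a, ⟨k.toNat, by omega⟩)
  else if h2 : k = 0 then lam a • LinearMap.id
  else creOp (a, ⟨(-k).toNat, by omega⟩)

lemma mop_pos (lam : Fin ℓ → ℂ) (a : Fin ℓ) (n : ℕ+) :
    mop lam a ((n : ℕ) : ℤ) = ((n : ℕ) : ℂ) • annOp (a, n) := by
  have hp := n.pos
  have h : (0 : ℤ) < ((n : ℕ) : ℤ) := by exact_mod_cast hp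
  rw [mop, dif_pos h]
  have h2 : (⟨(((n : ℕ) : ℤ)).toNat, by omega⟩ : ℕ+) = n :=
    Subtype.ext (by show (((n : ℕ) : ℤ)).toNat = (n : ℕ); omega)
  rw [h2]
  rw [Int.cast_natCast]

lemma mop_zero' (lam : Fin ℓ → ℂ) (a : Fin ℓ) :
    mop lam a 0 = lam a • LinearMap.id := by
  rw [mop, dif_neg (lt_irrefl 0), dif_pos rfl]

lemma mop_neg (lam : Fin ℓ → ℂ) (a : Fin ℓ) (n : ℕ+) :
    mop lam a (-((n : ℕ) : ℤ)) = creOp (a, n) := by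
  have hp := n.pos
  have h1 : ¬ (0 : ℤ) < -((n : ℕ) : ℤ) := by omega
  have h2 : -((n : ℕ) : ℤ) ≠ 0 := by omega
  rw [mop, dif_neg h1, dif_neg h2]
  have h3 : (⟨(-(-((n : ℕ) : ℤ))).toNat, by omega⟩ : ℕ+) = n :=
    Subtype.ext (by show (-(-((n : ℕ) : ℤ))).toNat = (n : ℕ); omega)
  rw [h3]

lemma creOp_single (x : Fin ℓ × ℕ+) (d : HMon ℓ) (c : ℂ) :
    creOp x (Finsupp.single d c) = Finsupp.single (d + Finsupp.single x 1) c := by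
  simp [creOp, Finsupp.mapDomain_single]

lemma annOp_single (x : Fin ℓ × ℕ+) (d : HMon ℓ) (c : ℂ) :
    annOp x (Finsupp.single d c)
      = (c * (d x : ℂ)) • Finsupp.single (d - Finsupp.single x 1) (1 : ℂ) := by
  simp [annOp, Finsupp.linearCombination_single, smul_smul]

def msize (d : HMon ℓ) : ℕ := Multiset.card d.toMultiset

lemma msize_eq_zero {d : HMon ℓ} : msize d = 0 ↔ d = 0 := by
  constructor
  · intro h
    have h2 : d.toMultiset = 0 := Multiset.card_eq_zero.mp h
    ext x
    have h3 := Finsupp.count_toMultiset d x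
    rw [h2] at h3
    simpa using h3.symm
  · rintro rfl; simp [msize]

lemma toMultiset_sub_single {d : HMon ℓ} {x : Fin ℓ × ℕ+} :
    (d - Finsupp.single x 1).toMultiset = d.toMultiset.erase x := by
  ext y
  rw [Finsupp.count_toMultiset]
  rcases eq_or_ne y x with rfl | hyx
  · rw [Multiset.count_erase_self, Finsupp.count_toMultiset, Finsupp.tsub_apply]
    simp
  · rw [Multiset.count_erase_of_ne hyx, Finsupp.count_toMultiset, Finsupp.tsub_apply]
    simp [Finsupp.single_apply, Ne.symm hyx]

lemma msize_sub_single {d : HMon ℓ} {x : Fin ℓ × ℕ+} (h : d x ≠ 0) :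
    msize (d - Finsupp.single x 1) + 1 = msize d := by
  have hx : x ∈ d.toMultiset := by
    rw [Finsupp.mem_toMultiset]; exact Finsupp.mem_support_iff.mpr h
  have hne : d.toMultiset ≠ 0 := by
    intro h0; rw [h0] at hx; simp at hx
  have hpos : 0 < Multiset.card d.toMultiset := Multiset.card_pos.mpr hne
  rw [msize, toMultiset_sub_single, Multiset.card_erase_of_mem hx]
  exact Nat.succ_pred_eq_of_pos hpos

lemma sub_single_add_single {d : HMon ℓ} {x : Fin ℓ × ℕ+} (h : d x ≠ 0) :
    (d - Finsupp.single x 1) + Finsupp.single x 1 = d := by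
  ext y
  rw [Finsupp.add_apply, Finsupp.tsub_apply]
  rcases eq_or_ne y x with rfl | hyx
  · simp only [Finsupp.single_eq_same]; omega
  · simp [Finsupp.single_apply, Ne.symm hyx]

lemma annOp_apply_sum (x : Fin ℓ × ℕ+) (p : HFock ℓ) :
    annOp x p = p.sum (fun d c => (c * (d x : ℂ)) •
      Finsupp.single (d - Finsupp.single x 1) (1 : ℂ)) := by
  rw [annOp, Finsupp.linearCombination_apply]
  congr 1
  ext d c
  rw [smul_smul]

lemma annOp_coeff_eq (x : Fin ℓ × ℕ+) (p : HFock ℓ) {d : HMon ℓ}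
    (hd : d ∈ p.support) (hdx : d x ≠ 0) :
    (annOp x p) (d - Finsupp.single x 1) = p d * (d x : ℂ) := by
  classical
  rw [annOp_apply_sum, Finsupp.sum_apply, Finsupp.sum, Finset.sum_eq_single d]
  · rw [Finsupp.smul_apply, Finsupp.single_apply, if_pos rfl, smul_eq_mul, mul_one]
  · intro e he hne
    rw [Finsupp.smul_apply, Finsupp.single_apply, smul_eq_mul]
    rcases Nat.eq_zero_or_pos (e x) with h0 | h0
    · rw [h0]; simp
    · rw [if_neg, mul_zero]
      intro heq
      apply hne
      ext y
      have hy := DFunLike.congr_fun heq y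
      rw [Finsupp.tsub_apply, Finsupp.tsub_apply] at hy
      rcases eq_or_ne y x with rfl | hyx
      · rw [Finsupp.single_eq_same] at hy
        omega
      · rw [Finsupp.single_apply, if_neg (Ne.symm hyx)] at hy
        omega
  · intro h; exact absurd hd h

lemma annOp_support_msize (x : Fin ℓ × ℕ+) (p : HFock ℓ) {N : ℕ}
    (hp : ∀ d ∈ p.support, msize d ≤ N + 1) :
    ∀ d' ∈ (annOp x p).support, msize d' ≤ N := by
  intro d' hd'
  have hne : (annOp x p) d' ≠ 0 := Finsupp.mem_support_iff.mp hd'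
  rw [annOp_apply_sum x p, Finsupp.sum_apply, Finsupp.sum] at hne
  obtain ⟨e, he, hterm⟩ := Finset.exists_ne_zero_of_sum_ne_zero hne
  rw [Finsupp.smul_apply, Finsupp.single_apply, smul_eq_mul] at hterm
  have hex : e x ≠ 0 := by
    intro h
    rw [h] at hterm
    simp at hterm
  have heq : e - Finsupp.single x 1 = d' := by
    by_contra h
    rw [if_neg h, mul_zero] at hterm
    exact hterm rfl
  have hms := msize_sub_single (d := e) (x := x) hex
  have hle := hp e he
  rw [heq] at hms
  omega

lemma step_down (lam : Fin ℓ → ℂ) (U : Submodule ℂ (HFock ℓ))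
    (hU : ∀ a k w, w ∈ U → mop lam a k w ∈ U) :
    ∀ N : ℕ, ∀ p : HFock ℓ, p ∈ U → p ≠ 0 → (∀ d ∈ p.support, msize d ≤ N) →
      Finsupp.single (0 : HMon ℓ) (1 : ℂ) ∈ U := by
  intro N
  induction N with
  | zero =>
    intro p hp hne hsz
    have hp0 : p = Finsupp.single 0 (p 0) := by
      ext d
      rcases eq_or_ne d 0 with rfl | hd
      · rw [Finsupp.single_eq_same]
      · rw [Finsupp.single_apply, if_neg (Ne.symm hd)]
        by_contra h
        have hmem : d ∈ p.support := Finsupp.mem_support_iff.mpr h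
        exact hd (msize_eq_zero.mp (Nat.le_zero.mp (hsz d hmem)))
    have hc : p 0 ≠ 0 := by
      intro h; apply hne; rw [hp0, h, Finsupp.single_zero]
    have heq : Finsupp.single (0 : HMon ℓ) (1 : ℂ) = (p 0)⁻¹ • p := by
      nth_rewrite 2 [hp0]
      rw [Finsupp.smul_single, smul_eq_mul, inv_mul_cancel₀ hc]
    rw [heq]
    exact U.smul_mem _ hp
  | succ N ih =>
    intro p hp hne hsz
    by_cases hall : ∀ d ∈ p.support, msize d ≤ N
    · exact ih p hp hne hall
    · push_neg at hall
      obtain ⟨d, hd, hdN⟩ := hall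
      have hd0 : d ≠ 0 := by
        intro h; subst h; simp [msize] at hdN
      obtain ⟨x, hx⟩ := Finsupp.support_nonempty_iff.mpr hd0
      have hxd : d x ≠ 0 := Finsupp.mem_support_iff.mp hx
      have hq_ne : annOp x p ≠ 0 := by
        intro h
        have hco := annOp_coeff_eq x p hd hxd
        rw [h] at hco
        have h1 : p d ≠ 0 := Finsupp.mem_support_iff.mp hd
        have h2 : (d x : ℂ) ≠ 0 := Nat.cast_ne_zero.mpr hxd
        have : p d * (d x : ℂ) = 0 := by
          rw [← hco]; rfl
        rcases mul_eq_zero.mp this with h | h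
        · exact h1 h
        · exact h2 h
      have hq_sz : ∀ d' ∈ (annOp x p).support, msize d' ≤ N :=
        annOp_support_msize x p hsz
      have hmem : mop lam x.1 ((x.2 : ℕ) : ℤ) p ∈ U := hU _ _ _ hp
      have hx2 : ((x.2 : ℕ) : ℂ) ≠ 0 :=
        Nat.cast_ne_zero.mpr (by have := x.2.pos; omega)
      have hmop : mop lam x.1 ((x.2 : ℕ) : ℤ) p = ((x.2 : ℕ) : ℂ) • annOp x p := by
        rw [mop_pos lam x.1 x.2, LinearMap.smul_apply]
      have hqU : annOp x p ∈ U := by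
        have hsm := U.smul_mem (((x.2 : ℕ) : ℂ))⁻¹ hmem
        rw [hmop, smul_smul, inv_mul_cancel₀ hx2, one_smul] at hsm
        exact hsm
      exact ih (annOp x p) hqU hq_ne hq_sz

lemma model_irred (lam : Fin ℓ → ℂ) (U : Submodule ℂ (HFock ℓ))
    (hU : ∀ a k w, w ∈ U → mop lam a k w ∈ U) : U = ⊥ ∨ U = ⊤ := by
  by_cases hbot : U = ⊥
  · exact Or.inl hbot
  right
  obtain ⟨p, hp, hpne⟩ := Submodule.exists_mem_ne_zero_of_ne_bot hbot
  have h1 : Finsupp.single (0 : HMon ℓ) (1 : ℂ) ∈ U :=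
    step_down lam U hU (p.support.sup msize) p hp hpne (fun d hd => Finset.le_sup hd)
  have key : ∀ (N : ℕ) (d : HMon ℓ), msize d ≤ N → Finsupp.single d (1 : ℂ) ∈ U := by
    intro N
    induction N with
    | zero =>
      intro d hd
      rw [msize_eq_zero.mp (Nat.le_zero.mp hd)]
      exact h1
    | succ N ih =>
      intro d hd
      by_cases hd0 : d = 0
      · rw [hd0]; exact h1
      obtain ⟨x, hx⟩ := Finsupp.support_nonempty_iff.mpr hd0
      have hxd : d x ≠ 0 := Finsupp.mem_support_iff.mp hx
      have hrec : Finsupp.single (d - Finsupp.single x 1) (1 : ℂ) ∈ U := by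
        apply ih
        have := msize_sub_single (d := d) (x := x) hxd
        omega
      have hstep := hU x.1 (-((x.2 : ℕ) : ℤ)) _ hrec
      rw [mop_neg] at hstep
      rw [show ((x.1, x.2) : Fin ℓ × ℕ+) = x from rfl, creOp_single,
        sub_single_add_single hxd] at hstep
      exact hstep
  rw [eq_top_iff]
  intro p _
  have hps : p = p.sum (fun d c => Finsupp.single d c) := (Finsupp.sum_single p).symm
  rw [hps, Finsupp.sum]
  apply Submodule.sum_mem
  intro d _
  have hsc : Finsupp.single d (p d) = (p d) • Finsupp.single d (1 : ℂ) := by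
    rw [Finsupp.smul_single, smul_eq_mul, mul_one]
  rw [hsc]
  exact U.smul_mem _ (key _ d le_rfl)

/-! #### Abstract Heisenberg modules -/

lemma wordAct_nil {M : Type} (f : Fin ℓ → ℤ → M → M) (w : M) :
    wordAct f [] w = w := rfl

lemma wordAct_cons {M : Type} (f : Fin ℓ → ℤ → M → M) (a : Fin ℓ) (n : ℕ+)
    (L : List (Fin ℓ × ℕ+)) (w : M) :
    wordAct f ((a, n) :: L) w = f a (-((n : ℕ) : ℤ)) (wordAct f L w) := rfl

structure HeisRep (ℓ : ℕ) (lam : Fin ℓ → ℂ) (M : Type) [AddCommGroup M] [Module ℂ M] where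
  e : Fin ℓ → ℤ → Module.End ℂ M
  comm : ∀ (a b : Fin ℓ) (m n : ℤ) (w : M),
    e a m (e b n w) = e b n (e a m w) + (if a = b ∧ m + n = 0 then (m : ℂ) else 0) • w
  v0 : M
  v0_ne : v0 ≠ 0
  annv : ∀ (a : Fin ℓ) (n : ℤ), 1 ≤ n → e a n v0 = 0
  eigv : ∀ a : Fin ℓ, e a 0 v0 = lam a • v0
  spanv : Submodule.span ℂ {w : M | ∃ L : List (Fin ℓ × ℕ+),
    w = wordAct (fun a k x => e a k x) L v0} = ⊤

namespace HeisRep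

variable {lam : Fin ℓ → ℂ} {M : Type} [AddCommGroup M] [Module ℂ M]

def wrd (R : HeisRep ℓ lam M) (L : List (Fin ℓ × ℕ+)) : M :=
  wordAct (fun a k x => R.e a k x) L R.v0

lemma wrd_nil (R : HeisRep ℓ lam M) : R.wrd [] = R.v0 := rfl

lemma wrd_cons (R : HeisRep ℓ lam M) (a : Fin ℓ) (n : ℕ+) (L : List (Fin ℓ × ℕ+)) :
    R.wrd ((a, n) :: L) = R.e a (-((n : ℕ) : ℤ)) (R.wrd L) := rfl

lemma wrd_perm (R : HeisRep ℓ lam M) {L L' : List (Fin ℓ × ℕ+)} (h : L.Perm L') :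
    R.wrd L = R.wrd L' := by
  induction h with
  | nil => rfl
  | cons x h ih =>
    obtain ⟨a, n⟩ := x
    rw [wrd_cons, wrd_cons, ih]
  | swap x y L =>
    obtain ⟨a, n⟩ := x
    obtain ⟨b, m⟩ := y
    rw [wrd_cons, wrd_cons, wrd_cons, wrd_cons, R.comm]
    have hcond : ¬(b = a ∧ -((m : ℕ) : ℤ) + -((n : ℕ) : ℤ) = 0) := by
      rintro ⟨-, h⟩
      have h1 := n.pos
      have h2 := m.pos
      omega
    rw [if_neg hcond, zero_smul, add_zero]
  | trans _ _ ih1 ih2 => rw [ih1, ih2]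

lemma e_zero (R : HeisRep ℓ lam M) (a : Fin ℓ) (w : M) : R.e a 0 w = lam a • w := by
  let S : Submodule ℂ M :=
    { carrier := {w : M | ∀ b : Fin ℓ, R.e b 0 w = lam b • w}
      add_mem' := by
        intro u v hu hv b
        rw [map_add, hu b, hv b, smul_add]
      zero_mem' := by intro b; rw [map_zero, smul_zero]
      smul_mem' := by
        intro c u hu b
        rw [map_smul, hu b, smul_comm] }
  have hw : ∀ L : List (Fin ℓ × ℕ+), R.wrd L ∈ S := by
    intro L
    induction L with
    | nil => exact fun b => R.eigv b
    | cons x L ih =>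
      obtain ⟨c, m⟩ := x
      intro b
      rw [wrd_cons, R.comm]
      have hcond : ¬(b = c ∧ (0 : ℤ) + -((m : ℕ) : ℤ) = 0) := by
        rintro ⟨-, h⟩
        have := m.pos
        omega
      rw [if_neg hcond, zero_smul, add_zero, ih b, map_smul]
  have hS : S = ⊤ := by
    rw [eq_top_iff, ← R.spanv]
    apply Submodule.span_le.mpr
    rintro w ⟨L, rfl⟩
    exact hw L
  have hmem : w ∈ S := hS ▸ Submodule.mem_top
  exact hmem a

lemma e_ann_wrd (R : HeisRep ℓ lam M) (a : Fin ℓ) (n : ℕ+) (L : List (Fin ℓ × ℕ+)) :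
    R.e a ((n : ℕ) : ℤ) (R.wrd L)
      = ((n : ℕ) : ℂ) • ((L.count (a, n) : ℕ) : ℂ) • R.wrd (L.erase (a, n)) := by
  induction L with
  | nil =>
    rw [wrd_nil, R.annv a _ (by exact_mod_cast n.pos), List.count_nil]
    simp
  | cons y L ih =>
    obtain ⟨b, m⟩ := y
    rw [wrd_cons, R.comm, ih, map_smul, map_smul, ← wrd_cons]
    by_cases hxy : ((a, n) : Fin ℓ × ℕ+) = (b, m)
    · have h1 : a = b := congrArg Prod.fst hxy
      have h2 : n = m := congrArg Prod.snd hxy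
      subst h1; subst h2
      rw [List.count_cons_self, List.erase_cons_head]
      have hcond : (a = a ∧ ((n : ℕ) : ℤ) + -((n : ℕ) : ℤ) = 0) := ⟨rfl, by ring⟩
      rw [if_pos hcond]
      by_cases hmem : ((a, n) : Fin ℓ × ℕ+) ∈ L
      · have hperm : R.wrd ((a, n) :: L.erase (a, n)) = R.wrd L :=
          (R.wrd_perm (List.perm_cons_erase hmem)).symm
        rw [hperm]
        have hc : ((L.count ((a, n) : Fin ℓ × ℕ+) + 1 : ℕ) : ℂ)
            = ((L.count ((a, n) : Fin ℓ × ℕ+) : ℕ) : ℂ) + 1 := by push_cast; ring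
        rw [hc, add_smul, one_smul, smul_add]
        push_cast
        rfl
      · rw [List.count_eq_zero.mpr hmem]
        simp
    · have hab : ¬(a = b ∧ ((n : ℕ) : ℤ) + -((m : ℕ) : ℤ) = 0) := by
        rintro ⟨rfl, h⟩
        apply hxy
        have h3 : (n : ℕ) = (m : ℕ) := by omega
        rw [PNat.coe_injective h3]
      rw [if_neg hab, zero_smul, add_zero, List.count_cons_of_ne (fun h => hxy h.symm),
        List.erase_cons_tail (not_beq_of_ne (fun h => hxy h.symm))]

/-! #### The comparison map with the model -/

def wof (R : HeisRep ℓ lam M) (d : HMon ℓ) : M := R.wrd d.toMultiset.toList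

lemma wof_zero (R : HeisRep ℓ lam M) : R.wof 0 = R.v0 := by
  rw [wof, Finsupp.toMultiset_zero, Multiset.toList_zero, wrd_nil]

lemma wrd_eq_wof (R : HeisRep ℓ lam M) (L : List (Fin ℓ × ℕ+)) :
    R.wrd L = R.wof (Multiset.toFinsupp (L : Multiset (Fin ℓ × ℕ+))) := by
  apply R.wrd_perm
  rw [← Multiset.coe_eq_coe, Multiset.coe_toList, Multiset.toFinsupp_toMultiset]

lemma wof_add_single (R : HeisRep ℓ lam M) (d : HMon ℓ) (a : Fin ℓ) (n : ℕ+) :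
    R.wof (d + Finsupp.single (a, n) 1) = R.e a (-((n : ℕ) : ℤ)) (R.wof d) := by
  have hperm : (d + Finsupp.single ((a, n) : Fin ℓ × ℕ+) 1).toMultiset.toList.Perm
      ((a, n) :: d.toMultiset.toList) := by
    rw [← Multiset.coe_eq_coe, Multiset.coe_toList, ← Multiset.cons_coe,
      Multiset.coe_toList, Finsupp.toMultiset_add, Finsupp.toMultiset_single,
      one_nsmul, add_comm, Multiset.singleton_add]
  rw [wof, R.wrd_perm hperm, wrd_cons, wof]

lemma e_ann_wof (R : HeisRep ℓ lam M) (a : Fin ℓ) (n : ℕ+) (d : HMon ℓ) :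
    R.e a ((n : ℕ) : ℤ) (R.wof d)
      = ((n : ℕ) : ℂ) • ((d (a, n) : ℕ) : ℂ) • R.wof (d - Finsupp.single (a, n) 1) := by
  rw [wof, R.e_ann_wrd a n]
  have hcount : d.toMultiset.toList.count ((a, n) : Fin ℓ × ℕ+) = d (a, n) := by
    have h1 := Multiset.coe_count ((a, n) : Fin ℓ × ℕ+) d.toMultiset.toList
    rw [Multiset.coe_toList] at h1
    rw [← h1, Finsupp.count_toMultiset]
  have hperm : (d.toMultiset.toList.erase ((a, n) : Fin ℓ × ℕ+)).Perm
      ((d - Finsupp.single (a, n) 1).toMultiset.toList) := by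
    rw [← Multiset.coe_eq_coe, Multiset.coe_toList, ← Multiset.coe_erase,
      Multiset.coe_toList, toMultiset_sub_single]
  rw [hcount, R.wrd_perm hperm, wof]

def toModel (R : HeisRep ℓ lam M) : HFock ℓ →ₗ[ℂ] M :=
  Finsupp.linearCombination ℂ R.wof

lemma toModel_single (R : HeisRep ℓ lam M) (d : HMon ℓ) (c : ℂ) :
    R.toModel (Finsupp.single d c) = c • R.wof d := by
  rw [toModel, Finsupp.linearCombination_single]

lemma toModel_mop (R : HeisRep ℓ lam M) (a : Fin ℓ) (k : ℤ) (p : HFock ℓ) :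
    R.toModel (mop lam a k p) = R.e a k (R.toModel p) := by
  induction p using Finsupp.induction_linear with
  | zero => rw [map_zero, map_zero, map_zero]
  | add f g hf hg => simp only [map_add, hf, hg]
  | single d c =>
    rcases lt_trichotomy k 0 with hk | hk | hk
    · obtain ⟨n, rfl⟩ : ∃ n : ℕ+, k = -((n : ℕ) : ℤ) :=
        ⟨⟨(-k).toNat, by omega⟩, by
          show k = -((((-k).toNat : ℕ)) : ℤ); omega⟩
      rw [mop_neg, creOp_single, toModel_single, wof_add_single R d a n,
        toModel_single, map_smul]
    · subst hk
      rw [mop_zero', LinearMap.smul_apply, LinearMap.id_apply, map_smul, R.e_zero]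
    · obtain ⟨n, rfl⟩ : ∃ n : ℕ+, k = ((n : ℕ) : ℤ) :=
        ⟨⟨k.toNat, by omega⟩, by show k = ((k.toNat : ℕ) : ℤ); omega⟩
      rw [mop_pos, LinearMap.smul_apply, annOp_single, map_smul, map_smul,
        toModel_single, one_smul, toModel_single, map_smul, e_ann_wof R a n d]
      simp only [smul_smul]
      congr 1
      ring

lemma toModel_surj (R : HeisRep ℓ lam M) : Function.Surjective R.toModel := by
  rw [← LinearMap.range_eq_top, eq_top_iff, ← R.spanv]
  apply Submodule.span_le.mpr
  rintro w ⟨L, rfl⟩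
  refine ⟨Finsupp.single (Multiset.toFinsupp (L : Multiset (Fin ℓ × ℕ+))) 1, ?_⟩
  rw [toModel_single, one_smul, ← wrd_eq_wof]
  rfl

lemma toModel_inj (R : HeisRep ℓ lam M) : Function.Injective R.toModel := by
  rw [← LinearMap.ker_eq_bot]
  rcases model_irred lam (LinearMap.ker R.toModel) (fun a k w hw => by
    rw [LinearMap.mem_ker] at hw ⊢
    rw [toModel_mop, hw, map_zero]) with h | h
  · exact h
  · exfalso
    have hmem : Finsupp.single (0 : HMon ℓ) (1 : ℂ) ∈ LinearMap.ker R.toModel := by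
      rw [h]; trivial
    rw [LinearMap.mem_ker, toModel_single, one_smul, wof_zero] at hmem
    exact R.v0_ne hmem

def equiv (R : HeisRep ℓ lam M) : HFock ℓ ≃ₗ[ℂ] M :=
  LinearEquiv.ofBijective R.toModel ⟨R.toModel_inj, R.toModel_surj⟩

lemma equiv_apply (R : HeisRep ℓ lam M) (p : HFock ℓ) : R.equiv p = R.toModel p := rfl

lemma equiv_symm_toModel (R : HeisRep ℓ lam M) (p : HFock ℓ) :
    R.equiv.symm (R.toModel p) = p := by
  rw [LinearEquiv.symm_apply_eq, equiv_apply]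

theorem irred (R : HeisRep ℓ lam M) (U : Submodule ℂ M)
    (hU : ∀ (a : Fin ℓ) (k : ℤ) (w : M), w ∈ U → R.e a k w ∈ U) : U = ⊥ ∨ U = ⊤ := by
  have hU' : ∀ a k p, p ∈ U.comap R.toModel → mop lam a k p ∈ U.comap R.toModel := by
    intro a k p hp
    rw [Submodule.mem_comap] at hp ⊢
    rw [toModel_mop]
    exact hU _ _ _ hp
  rcases model_irred lam (U.comap R.toModel) hU' with h | h
  · left
    rw [eq_bot_iff]
    intro w hw
    obtain ⟨p, rfl⟩ := R.toModel_surj w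
    have hp : p ∈ U.comap R.toModel := Submodule.mem_comap.mpr hw
    rw [h, Submodule.mem_bot] at hp
    rw [hp, map_zero]
    exact Submodule.zero_mem ⊥
  · right
    rw [eq_top_iff]
    intro w _
    obtain ⟨p, rfl⟩ := R.toModel_surj w
    have hp : p ∈ U.comap R.toModel := by rw [h]; trivial
    exact Submodule.mem_comap.mp hp

theorem heis_iso {N : Type} [AddCommGroup N] [Module ℂ N]
    (R : HeisRep ℓ lam M) (R' : HeisRep ℓ lam N) :
    ∃ g : M ≃ₗ[ℂ] N, ∀ (a : Fin ℓ) (k : ℤ) (w : M), g (R.e a k w) = R'.e a k (g w) := by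
  refine ⟨R.equiv.symm.trans R'.equiv, ?_⟩
  intro a k w
  obtain ⟨p, rfl⟩ := R.toModel_surj w
  have hg : ∀ q : HFock ℓ, (R.equiv.symm.trans R'.equiv) (R.toModel q) = R'.toModel q := by
    intro q
    rw [LinearEquiv.trans_apply, equiv_symm_toModel, equiv_apply]
  rw [← toModel_mop, hg, hg, toModel_mop]

end HeisRep
/-! #### Weak module generalities -/

section WkModAux

variable {V : Type} [AddCommGroup V] [Module ℂ V] {A : VOA V}
variable {M : Type} [AddCommGroup M] [Module ℂ M]

lemma act_add (P : WkMod A M) (u v : V) (n : ℤ) (w : M) :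
    P.act (u + v) n w = P.act u n w + P.act v n w := by
  rw [map_add]; rfl

lemma act_smul (P : WkMod A M) (c : ℂ) (u : V) (n : ℤ) (w : M) :
    P.act (c • u) n w = c • P.act u n w := by
  rw [map_smul]; rfl

lemma act_zero (P : WkMod A M) (n : ℤ) (w : M) : P.act (0 : V) n w = 0 := by
  rw [map_zero]; rfl

lemma act_neg (P : WkMod A M) (u : V) (n : ℤ) (w : M) :
    P.act (-u) n w = -(P.act u n w) := by
  rw [map_neg]; rfl

lemma act_one (P : WkMod A M) (n : ℤ) (w : M) :
    P.act A.one n w = if n = -1 then w else 0 := by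
  rw [P.vacuum_act n]
  split <;> rfl

lemma trunc_nat (P : WkMod A M) (u : V) (w : M) (c : ℤ) :
    ∃ K : ℕ, ∀ i : ℕ, K ≤ i → P.act u (c + i) w = 0 := by
  obtain ⟨N, hN⟩ := P.trunc u w
  exact ⟨(N - c).toNat, fun i hi => hN _ (by omega)⟩

/-- The module Borcherds identity specialized to `m = 0` (the iterate formula),
with the right-hand side written as a finite sum. -/
lemma wk_iterate (P : WkMod A M) (u v : V) (p n : ℤ) (w : M) (K : ℕ)
    (hKv : ∀ i : ℕ, K ≤ i → P.act v (n + i) w = 0)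
    (hKu : ∀ i : ℕ, K ≤ i → P.act u ((0 : ℤ) + i) w = 0) :
    P.act (A.Y u p v) n w = ∑ i ∈ Finset.range K,
      ((-1 : ℂ) ^ i * zchoose p i) • (P.act u (0 + p - i) (P.act v (n + i) w)
        - ((-1 : ℂ) ^ p) • P.act v (n + p - i) (P.act u (0 + i) w)) := by
  have H := P.borcherds u v w p 0 n
  have hL : (∑ᶠ i : ℕ, zchoose 0 i • P.act (A.Y u (p + i) v) (0 + n - i) w)
      = P.act (A.Y u p v) n w := by
    rw [finsum_eq_single _ 0 (fun i hi => by rw [zchoose_zero_left hi, zero_smul])]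
    norm_num [zchoose_zero_right]
  have hR : (∑ᶠ i : ℕ, ((-1 : ℂ) ^ i * zchoose p i) •
        (P.act u (0 + p - i) (P.act v (n + i) w)
          - ((-1 : ℂ) ^ p) • P.act v (n + p - i) (P.act u (0 + i) w)))
      = ∑ i ∈ Finset.range K,
        ((-1 : ℂ) ^ i * zchoose p i) • (P.act u (0 + p - i) (P.act v (n + i) w)
          - ((-1 : ℂ) ^ p) • P.act v (n + p - i) (P.act u (0 + i) w)) := by
    apply finsum_eq_range_sum
    intro i hi
    rw [hKv i hi, hKu i hi]
    simp
  rw [hL, hR] at H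
  exact H

lemma hgen_mode {ℓ : ℕ} {hgen : Fin ℓ → V} (heis : IsHeisenberg A hgen)
    (a b : Fin ℓ) (i : ℕ) :
    A.Y (hgen a) ((i : ℕ) : ℤ) (hgen b) = if a = b ∧ i = 1 then A.one else 0 := by
  have h1 : A.Y (hgen b) (-1) A.one = hgen b := A.create _
  have h2 := LinearMap.congr_fun (heis.heis_comm a b ((i : ℕ) : ℤ) (-1)) A.one
  rw [LinearMap.sub_apply, Module.End.mul_apply, Module.End.mul_apply, h1,
    A.create_ge (hgen a) _ (by positivity), map_zero, sub_zero,
    LinearMap.smul_apply, Module.End.one_apply] at h2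
  rw [h2]
  by_cases hab : a = b
  · by_cases hi : i = 1
    · subst hi
      rw [if_pos ⟨hab, by norm_num⟩, if_pos ⟨hab, rfl⟩]
      norm_num
    · rw [if_neg, if_neg (fun h => hi h.2), zero_smul]
      rintro ⟨-, h⟩
      exact hi (by omega)
  · rw [if_neg (fun h => hab h.1), if_neg (fun h => hab h.1), zero_smul]

lemma wk_heis_comm {ℓ : ℕ} {hgen : Fin ℓ → V} (P : WkMod A M)
    (heis : IsHeisenberg A hgen) (a b : Fin ℓ) (m n : ℤ) (w : M) :
    P.act (hgen a) m (P.act (hgen b) n w)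
      = P.act (hgen b) n (P.act (hgen a) m w)
        + (if a = b ∧ m + n = 0 then (m : ℂ) else 0) • w := by
  have H := P.borcherds (hgen a) (hgen b) w 0 m n
  have hR : (∑ᶠ i : ℕ, ((-1 : ℂ) ^ i * zchoose 0 i) •
        (P.act (hgen a) (m + 0 - i) (P.act (hgen b) (n + i) w)
          - ((-1 : ℂ) ^ (0 : ℤ)) • P.act (hgen b) (n + 0 - i) (P.act (hgen a) (m + i) w)))
      = P.act (hgen a) m (P.act (hgen b) n w)
        - P.act (hgen b) n (P.act (hgen a) m w) := by
    rw [finsum_eq_single _ 0 (fun i hi => by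
      rw [zchoose_zero_left hi, mul_zero, zero_smul])]
    norm_num [zchoose_zero_right]
  have hL : (∑ᶠ i : ℕ, zchoose m i • P.act (A.Y (hgen a) (0 + i) (hgen b)) (m + n - i) w)
      = (if a = b ∧ m + n = 0 then (m : ℂ) else 0) • w := by
    rw [finsum_eq_single _ 1 (fun i hi => by
      rw [zero_add, hgen_mode heis, if_neg (fun h => hi h.2), map_zero,
        Pi.zero_apply, LinearMap.zero_apply, smul_zero])]
    rw [zero_add, hgen_mode heis]
    by_cases hab : a = b
    · rw [if_pos ⟨hab, rfl⟩, zchoose_one_right, act_one]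
      by_cases hmn : m + n = 0
      · rw [if_pos (by push_cast; omega), if_pos ⟨hab, hmn⟩]
      · rw [if_neg (by push_cast; omega), if_neg (fun h => hmn h.2), smul_zero,
          zero_smul]
    · rw [if_neg (fun h => hab h.1), map_zero, if_neg (fun h => hab h.1),
        Pi.zero_apply, LinearMap.zero_apply, smul_zero, zero_smul]
  rw [hL, hR] at H
  have H2 := sub_eq_iff_eq_add.mp H.symm
  rw [H2, add_comm]

/-- Products of module modes lie in any submodule containing all modes of iterates. -/
lemma wk_prod_mem (P : WkMod A M) (u v : V) (w : M) (S : Submodule ℂ M)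
    (hS : ∀ k j : ℤ, P.act (A.Y u k v) j w ∈ S) :
    ∀ (m n : ℤ), P.act u m (P.act v n w) ∈ S := by
  obtain ⟨n₀, hn₀⟩ := P.trunc v w
  obtain ⟨m₀, hm₀⟩ := P.trunc u w
  set mm : ℤ := max m₀ 0 with hmm
  have hmm0 : (0 : ℤ) ≤ mm := le_max_right _ _
  have hmmm : m₀ ≤ mm := le_max_left _ _
  have main : ∀ j : ℕ, ∀ (n m : ℤ), n₀ ≤ n + j → P.act u m (P.act v n w) ∈ S := by
    intro j
    induction j with
    | zero =>
      intro n m h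
      rw [hn₀ n (by omega), map_zero]
      exact S.zero_mem
    | succ j ih =>
      intro n m h
      by_cases hnj : n₀ ≤ n + j
      · exact ih n m hnj
      have H := P.borcherds u v w (m - mm) mm n
      have hL : (∑ᶠ i : ℕ, zchoose mm i • P.act (A.Y u ((m - mm) + i) v) (mm + n - i) w)
          = ∑ i ∈ Finset.range (mm.toNat + 1),
              zchoose mm i • P.act (A.Y u ((m - mm) + i) v) (mm + n - i) w := by
        apply finsum_eq_range_sum
        intro i hi
        rw [zchoose_eq_zero hmm0 (by omega), zero_smul]
      have hR : (∑ᶠ i : ℕ, ((-1 : ℂ) ^ i * zchoose (m - mm) i) •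
            (P.act u (mm + (m - mm) - i) (P.act v (n + i) w)
              - ((-1 : ℂ) ^ (m - mm)) • P.act v (n + (m - mm) - i) (P.act u (mm + i) w)))
          = ∑ i ∈ Finset.range (j + 1), ((-1 : ℂ) ^ i * zchoose (m - mm) i) •
              (P.act u (mm + (m - mm) - i) (P.act v (n + i) w)
                - ((-1 : ℂ) ^ (m - mm)) • P.act v (n + (m - mm) - i) (P.act u (mm + i) w)) := by
        apply finsum_eq_range_sum
        intro i hi
        rw [hn₀ (n + i) (by omega), hm₀ (mm + i) (by omega)]
        simp
      rw [hL, hR] at H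
      have H2 : (∑ i ∈ Finset.range (mm.toNat + 1),
            zchoose mm i • P.act (A.Y u ((m - mm) + i) v) (mm + n - i) w)
          = ∑ i ∈ Finset.range (j + 1), ((-1 : ℂ) ^ i * zchoose (m - mm) i) •
              P.act u (mm + (m - mm) - i) (P.act v (n + i) w) := by
        rw [H]
        apply Finset.sum_congr rfl
        intro i _
        rw [hm₀ (mm + i) (by omega), map_zero, smul_zero, sub_zero]
      set f : ℕ → M := fun i => ((-1 : ℂ) ^ i * zchoose (m - mm) i) •
          P.act u (mm + (m - mm) - i) (P.act v (n + i) w) with hf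
      have h0mem : f 0 ∈ S := by
        have hsplit : f 0 = (∑ i ∈ Finset.range (j + 1), f i)
            - ∑ i ∈ Finset.range j, f (i + 1) := by
          rw [Finset.sum_range_succ']
          abel
        rw [hsplit, ← H2]
        apply Submodule.sub_mem
        · exact Submodule.sum_mem _ (fun i _ => Submodule.smul_mem _ _ (hS _ _))
        · apply Submodule.sum_mem
          intro i _
          simp only [hf]
          exact Submodule.smul_mem _ _ (ih (n + (i + 1)) _ (by push_cast; omega))
      have hfin : P.act u m (P.act v n w) = f 0 := by
        simp only [hf]
        rw [zchoose_zero_right, pow_zero, one_mul, one_smul]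
        norm_num
      rw [hfin]
      exact h0mem
  intro m n
  exact main (n₀ - n).toNat n m (by omega)

/-- Generation: a submodule of `V` containing the vacuum and closed under the
creation modes of the Heisenberg generators is everything. -/
lemma heis_gen {ℓ : ℕ} {hgen : Fin ℓ → V} (heis : IsHeisenberg A hgen)
    (S : Submodule ℂ V) (hone : A.one ∈ S)
    (hcl : ∀ (a : Fin ℓ) (n : ℕ+) (v : V), v ∈ S → A.Y (hgen a) (-((n : ℕ) : ℤ)) v ∈ S) :
    S = ⊤ := by
  rw [eq_top_iff, ← heis.span_words]
  apply Submodule.span_le.mpr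
  rintro v ⟨L, rfl⟩
  induction L with
  | nil => exact hone
  | cons x L ih =>
    obtain ⟨a, n⟩ := x
    exact hcl a n _ ih

end WkModAux

/-! #### Fock modules as Heisenberg representations -/

section FockAux

variable {V : Type} [AddCommGroup V] [Module ℂ V] {A : VOA V}
variable {ℓ : ℕ} {hgen : Fin ℓ → V}
variable {M : Type} [AddCommGroup M] [Module ℂ M]

noncomputable def fockHeisRep (P : WkMod A M) (heis : IsHeisenberg A hgen)
    {lam : Fin ℓ → ℂ} (hf : IsFockModule A hgen P lam) : HeisRep ℓ lam M where
  e a n := P.act (hgen a) n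
  comm a b m n w := wk_heis_comm P heis a b m n w
  v0 := hf.choose
  v0_ne := hf.choose_spec.1
  annv a n hn := hf.choose_spec.2.1 a n hn
  eigv a := hf.choose_spec.2.2.1 a
  spanv := hf.choose_spec.2.2.2

noncomputable def fockHeisRepNeg (P : WkMod A M) (heis : IsHeisenberg A hgen)
    {lam : Fin ℓ → ℂ} (hf : IsFockModule A hgen P (-lam)) : HeisRep ℓ lam M where
  e a n := -(P.act (hgen a) n)
  comm a b m n w := by
    simp only [LinearMap.neg_apply, map_neg, neg_neg]
    exact wk_heis_comm P heis a b m n w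
  v0 := hf.choose
  v0_ne := hf.choose_spec.1
  annv a n hn := by
    simp only [LinearMap.neg_apply, hf.choose_spec.2.1 a n hn, neg_zero]
  eigv a := by
    have h := hf.choose_spec.2.2.1 a
    rw [LinearMap.neg_apply, h, Pi.neg_apply, neg_smul, neg_neg]
  spanv := by
    apply top_unique
    refine le_trans (le_of_eq hf.choose_spec.2.2.2.symm) (Submodule.span_le.mpr ?_)
    rintro w ⟨L, rfl⟩
    have key : ∀ L' : List (Fin ℓ × ℕ+), ∃ c : ℂ,
        wordAct (fun a k x => P.act (hgen a) k x) L' hf.choose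
          = c • wordAct (fun a k x => (-(P.act (hgen a) k)) x) L' hf.choose := by
      intro L'
      induction L' with
      | nil => exact ⟨1, (one_smul _ _).symm⟩
      | cons x L' ih =>
        obtain ⟨a, n⟩ := x
        obtain ⟨c, hc⟩ := ih
        refine ⟨-c, ?_⟩
        rw [wordAct_cons, wordAct_cons, hc, map_smul]
        simp only [LinearMap.neg_apply, smul_neg, neg_smul, neg_neg]
    obtain ⟨c, hc⟩ := key L
    rw [hc]
    exact Submodule.smul_mem _ _ (Submodule.subset_span ⟨L, rfl⟩)

end FockAux

end AuxDev
/-- Proposition 2.5. If `λ ≠ 0` then the Fock module `M(1,λ)`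
(restricted to `𝓗⁺` along `ι`) is an irreducible `𝓗⁺`-module, and `M(1,λ)` and
`M(1,-λ)` are isomorphic as `𝓗⁺`-modules. -/
theorem statement3 (ℓ : ℕ) {V W : Type} [AddCommGroup V] [Module ℂ V]
    [AddCommGroup W] [Module ℂ W] (S : HeisenbergPlusSetting ℓ V W)
    (lam : Fin ℓ → ℂ) (hlam : lam ≠ 0) :
    (∀ (M : Type) [AddCommGroup M] [Module ℂ M] (Q : WkMod S.B M),
      IsFockRestriction S.A S.hgen S.ι lam Q → Q.Irreducible) ∧
    (∀ (M N : Type) [AddCommGroup M] [Module ℂ M] [AddCommGroup N] [Module ℂ N]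
      (Q : WkMod S.B M) (Q' : WkMod S.B N),
      IsFockRestriction S.A S.hgen S.ι lam Q →
      IsFockRestriction S.A S.hgen S.ι (-lam) Q' →
      ModIso S.B Q Q') := by
  constructor
  · -- Irreducibility
    intro M _ _ Q hQ
    obtain ⟨P, hfock, hact⟩ := hQ
    let R : HeisRep ℓ lam M := fockHeisRep P S.heis hfock
    have hRe : ∀ (a : Fin ℓ) (n : ℤ) (w : M), R.e a n w = P.act (S.hgen a) n w :=
      fun a n w => rfl
    refine ⟨⟨R.v0, R.v0_ne⟩, ?_⟩
    intro U hU
    have hplus : ∀ v : V, S.θ v = v → ∀ (n : ℤ) (w : M), w ∈ U → P.act v n w ∈ U := by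
      intro v hv n w hw
      have hrange : v ∈ LinearMap.range S.ι := by
        rw [S.fixedSub.range_eq, Module.End.mem_eigenspace_iff, one_smul]
        exact hv
      obtain ⟨u, rfl⟩ := hrange
      rw [← hact]
      exact hU u n w hw
    set U₂ : Submodule ℂ M := Submodule.span ℂ
      {x : M | ∃ (v : V) (n : ℤ) (w : M), S.θ v = -v ∧ w ∈ U ∧ x = P.act v n w}
      with hU₂def
    have hUU₂ : ∀ (a : Fin ℓ) (n : ℤ) (w : M), w ∈ U → P.act (S.hgen a) n w ∈ U₂ := by
      intro a n w hw
      exact Submodule.subset_span ⟨S.hgen a, n, w, S.thetaAut.map_gen a, hw, rfl⟩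
    have hU₂U : ∀ (a : Fin ℓ) (n : ℤ) (x : M), x ∈ U₂ → P.act (S.hgen a) n x ∈ U := by
      intro a n x hx
      induction hx using Submodule.span_induction with
      | mem x hx =>
        obtain ⟨v, m, w, hv, hw, rfl⟩ := hx
        apply wk_prod_mem P (S.hgen a) v w U ?_ n m
        intro k j
        apply hplus _ ?_ j w hw
        rw [S.thetaAut.map_Y, S.thetaAut.map_gen a, hv]
        have h1 : S.A.Y (-(S.hgen a)) = -(S.A.Y (S.hgen a)) := map_neg _ _
        rw [h1, Pi.neg_apply, LinearMap.neg_apply, map_neg, neg_neg]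
      | zero => rw [map_zero]; exact U.zero_mem
      | add x y _ _ hx hy => rw [map_add]; exact U.add_mem hx hy
      | smul c x _ hx => rw [map_smul]; exact U.smul_mem c hx
    have hstab : ∀ (a : Fin ℓ) (k : ℤ) (w : M), w ∈ U ⊓ U₂ → R.e a k w ∈ U ⊓ U₂ := by
      intro a k w hw
      rw [hRe]
      exact ⟨hU₂U a k w hw.2, hUU₂ a k w hw.1⟩
    rcases R.irred (U ⊓ U₂) hstab with hD | hD
    · left
      rw [eq_bot_iff]
      intro w hw
      obtain ⟨a, ha⟩ := Function.ne_iff.mp hlam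
      have h1 : lam a • w ∈ U := U.smul_mem _ hw
      have h2 : lam a • w ∈ U₂ := by
        have he0 := R.e_zero a w
        rw [hRe] at he0
        rw [← he0]
        exact hUU₂ a 0 w hw
      have hmem : lam a • w ∈ U ⊓ U₂ := ⟨h1, h2⟩
      rw [hD, Submodule.mem_bot] at hmem
      rcases smul_eq_zero.mp hmem with h | h
      · exact absurd h (by simpa using ha)
      · rw [h]; exact Submodule.zero_mem ⊥
    · right
      rw [eq_top_iff]
      intro w _
      have hmem : w ∈ U ⊓ U₂ := by rw [hD]; trivial
      exact hmem.1
  · -- Isomorphism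
    intro M N _ _ _ _ Q Q' hQ hQ'
    obtain ⟨P₁, hf₁, hact₁⟩ := hQ
    obtain ⟨P₂, hf₂, hact₂⟩ := hQ'
    let R₁ : HeisRep ℓ lam M := fockHeisRep P₁ S.heis hf₁
    let R₂ : HeisRep ℓ lam N := fockHeisRepNeg P₂ S.heis hf₂
    obtain ⟨g, hg⟩ := R₁.heis_iso R₂
    have hgen' : ∀ (a : Fin ℓ) (n : ℤ) (w : M),
        g (P₁.act (S.hgen a) n w) = P₂.act (S.θ (S.hgen a)) n (g w) := by
      intro a n w
      have h1 := hg a n w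
      rw [S.thetaAut.map_gen a, act_neg]
      exact h1
    let SS : Submodule ℂ V :=
      { carrier := {u : V | ∀ (n : ℤ) (w : M), g (P₁.act u n w) = P₂.act (S.θ u) n (g w)}
        add_mem' := by
          intro u v hu hv n w
          rw [act_add, map_add, map_add, act_add, hu n w, hv n w]
        zero_mem' := by
          intro n w
          rw [act_zero, map_zero, map_zero, act_zero]
        smul_mem' := by
          intro c u hu n w
          rw [act_smul, map_smul, map_smul, act_smul, hu n w] }
    have hSSmem : ∀ u : V, u ∈ SS ↔
        ∀ (n : ℤ) (w : M), g (P₁.act u n w) = P₂.act (S.θ u) n (g w) := fun u => Iff.rfl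
    have hSS : SS = ⊤ := by
      apply heis_gen S.heis SS
      · rw [hSSmem]
        intro n w
        rw [S.thetaAut.map_one, act_one, act_one]
        split_ifs
        · rfl
        · exact map_zero g
      · intro a n v hv
        rw [hSSmem] at hv ⊢
        intro k w
        obtain ⟨K₁, hK₁⟩ := trunc_nat P₁ v w k
        obtain ⟨K₂, hK₂⟩ := trunc_nat P₁ (S.hgen a) w 0
        obtain ⟨K₃, hK₃⟩ := trunc_nat P₂ (S.θ v) (g w) k
        obtain ⟨K₄, hK₄⟩ := trunc_nat P₂ (S.θ (S.hgen a)) (g w) 0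
        set K := max (max K₁ K₂) (max K₃ K₄) with hK
        rw [wk_iterate P₁ (S.hgen a) v (-((n : ℕ) : ℤ)) k w K
          (fun i hi => hK₁ i (by omega)) (fun i hi => hK₂ i (by omega))]
        rw [S.thetaAut.map_Y,
          wk_iterate P₂ (S.θ (S.hgen a)) (S.θ v) (-((n : ℕ) : ℤ)) k (g w) K
          (fun i hi => hK₃ i (by omega)) (fun i hi => hK₄ i (by omega))]
        rw [map_sum]
        apply Finset.sum_congr rfl
        intro i _
        rw [map_smul, map_sub, map_smul]
        rw [hgen' a, hv, hv, hgen' a]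
    refine ⟨g, ?_⟩
    intro u k w
    rw [hact₁ u k, hact₂ u k]
    have hu : S.ι u ∈ SS := by rw [hSS]; trivial
    rw [hSSmem] at hu
    have hfix : S.θ (S.ι u) = S.ι u := by
      have hr : S.ι u ∈ LinearMap.range S.ι := ⟨u, rfl⟩
      rw [S.fixedSub.range_eq] at hr
      have := Module.End.mem_eigenspace_iff.mp hr
      rw [one_smul] at this
      exact this
    have := hu k w
    rw [hfix] at this
    exact this
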